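/- Let G be a finite simple graph on n vertices that admits a proper coloring with k colors. Then G admits a proper coloring with at most k + ⌈√n⌉ colors in which every color class contains at most 2⌈√n⌉ vertices. -/
import Mathlib


open SimpleGraph

open Finset in
private noncomputable def crRk {V : Type*} [Fintype V] {k : ℕ} (c : V → Fin k)
    (e : V ≃ Fin (Fintype.card V)) (v : V) : ℕ :=
  (Finset.univ.filter fun w => c w = c v ∧ e w < e v).card

private noncomputable def crSz {V : Type*} [Fintype V] {k : ℕ} (c : V → Fin k) (i : Fin k) : ℕ :=
  (Finset.univ.filter fun v => c v = i).card

private noncomputable def crBlk {V : Type*} [Fintype V] {k : ℕ} (s : ℕ) (c : V → Fin k)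
    (i : Fin k) : ℕ :=
  (crSz c i - 2*s + (s-1)) / s

private noncomputable def crOff {V : Type*} [Fintype V] {k : ℕ} (s : ℕ) (c : V → Fin k)
    (i : Fin k) : ℕ :=
  ∑ i' ∈ Finset.Iio i, crBlk s c i'

private noncomputable def crF {V : Type*} [Fintype V] {k : ℕ} (s : ℕ) (c : V → Fin k)
    (e : V ≃ Fin (Fintype.card V)) (v : V) : ℕ :=
  if crRk c e v < 2*s then (c v : ℕ)
  else k + crOff s c (c v) + (crRk c e v - 2*s)/s

section lemmas

variable {V : Type*} [Fintype V] {k : ℕ} (c : V → Fin k) (e : V ≃ Fin (Fintype.card V))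

private lemma crRk_lt (v : V) : crRk c e v < crSz c (c v) := by
  apply Finset.card_lt_card
  rw [Finset.ssubset_iff_of_subset]
  · exact ⟨v, by simp⟩
  · intro w hw
    simp only [Finset.mem_filter] at hw ⊢
    exact ⟨hw.1, hw.2.1⟩

private lemma crRk_lt_rk {u v : V} (hc : c u = c v) (he : e u < e v) :
    crRk c e u < crRk c e v := by
  classical
  have hsub : insert u (Finset.univ.filter fun w => c w = c u ∧ e w < e u) ⊆
      (Finset.univ.filter fun w => c w = c v ∧ e w < e v) := by
    intro w hw
    rcases Finset.mem_insert.mp hw with rfl | hw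
    · simp [hc, he]
    · simp only [Finset.mem_filter] at hw ⊢
      exact ⟨hw.1, hc ▸ hw.2.1, hw.2.2.trans he⟩
  have hnot : u ∉ (Finset.univ.filter fun w => c w = c u ∧ e w < e u) := by simp
  have := Finset.card_le_card hsub
  rw [Finset.card_insert_of_notMem hnot] at this
  unfold crRk
  omega

private lemma crRk_inj {u v : V} (hc : c u = c v) (hr : crRk c e u = crRk c e v) : u = v := by
  rcases lt_trichotomy (e u) (e v) with h | h | h
  · exact absurd hr (crRk_lt_rk c e hc h).ne
  · exact e.injective h
  · exact absurd hr.symm (crRk_lt_rk c e hc.symm h).ne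

private lemma crSz_sum : ∑ i, crSz c i = Fintype.card V := by
  rw [← Finset.card_univ]
  exact (Finset.card_eq_sum_card_fiberwise (fun x _ => Finset.mem_univ (c x))).symm

private lemma crBlk_mul_le (s : ℕ) (i : Fin k) : s * crBlk s c i ≤ crSz c i := by
  rcases Nat.eq_zero_or_pos s with rfl | hs
  · simp
  unfold crBlk
  have h1 := Nat.div_mul_le_self (crSz c i - 2*s + (s-1)) s
  by_cases h2 : crSz c i ≤ 2*s
  · have : crSz c i - 2*s + (s-1) = s - 1 := by omega
    rw [this, Nat.div_eq_of_lt (by omega)]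
    omega
  · have hx : crSz c i - 2*s + (s-1) ≤ crSz c i := by omega
    calc s * ((crSz c i - 2*s + (s-1)) / s)
        = ((crSz c i - 2*s + (s-1)) / s) * s := mul_comm _ _
      _ ≤ crSz c i - 2*s + (s-1) := h1
      _ ≤ crSz c i := hx

private lemma crBlk_sum_le (s : ℕ) (hs : 0 < s) (hn : Fintype.card V ≤ s * s) :
    ∑ i, crBlk s c i ≤ s := by
  have h1 : s * ∑ i, crBlk s c i ≤ s * s := by
    rw [Finset.mul_sum]
    calc ∑ i, s * crBlk s c i ≤ ∑ i, crSz c i := Finset.sum_le_sum fun i _ => crBlk_mul_le c s i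
    _ = Fintype.card V := crSz_sum c
    _ ≤ s * s := hn
  exact Nat.le_of_mul_le_mul_left h1 hs

private lemma crOff_add_blk_le {i i' : Fin k} (s : ℕ) (h : i < i') :
    crOff s c i + crBlk s c i ≤ crOff s c i' := by
  have h1 : Finset.Iic i ⊆ Finset.Iio i' := fun x hx =>
    Finset.mem_Iio.mpr (lt_of_le_of_lt (Finset.mem_Iic.mp hx) h)
  calc crOff s c i + crBlk s c i = ∑ x ∈ insert i (Finset.Iio i), crBlk s c x := by
        rw [Finset.sum_insert (by simp), crOff]; ring
    _ = ∑ x ∈ Finset.Iic i, crBlk s c x := by rw [Finset.Iio_insert]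
    _ ≤ ∑ x ∈ Finset.Iio i', crBlk s c x := Finset.sum_le_sum_of_subset h1
    _ = crOff s c i' := rfl

private lemma crOff_add_blk_le_sum (s : ℕ) (i : Fin k) :
    crOff s c i + crBlk s c i ≤ ∑ i', crBlk s c i' := by
  calc crOff s c i + crBlk s c i = ∑ x ∈ insert i (Finset.Iio i), crBlk s c x := by
        rw [Finset.sum_insert (by simp), crOff]; ring
    _ ≤ ∑ i', crBlk s c i' := Finset.sum_le_sum_of_subset (Finset.subset_univ _)

private lemma crOff_disj {s : ℕ} {i i' : Fin k} {t t' : ℕ}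
    (ht : t < crBlk s c i) (ht' : t' < crBlk s c i')
    (heq : crOff s c i + t = crOff s c i' + t') : i = i' := by
  rcases lt_trichotomy i i' with h | h | h
  · have := crOff_add_blk_le c s h; omega
  · exact h
  · have := crOff_add_blk_le c s h; omega

private lemma crRk_div_lt {s : ℕ} (hs : 0 < s) {v : V} (hv : 2*s ≤ crRk c e v) :
    (crRk c e v - 2*s)/s < crBlk s c (c v) := by
  have h1 := crRk_lt c e v
  have hm : 2*s + 1 ≤ crSz c (c v) := by omega
  unfold crBlk
  have h2 : crSz c (c v) - 2*s + (s-1) = (crSz c (c v) - 2*s - 1) + s := by omega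
  rw [h2, Nat.add_div_right _ hs]
  have h3 : crRk c e v - 2*s ≤ crSz c (c v) - 2*s - 1 := by omega
  have h4 : (crRk c e v - 2*s)/s ≤ (crSz c (c v) - 2*s - 1)/s := Nat.div_le_div_right h3
  omega

private lemma crF_lt (s : ℕ) (hs : 0 < s) (hn : Fintype.card V ≤ s * s) (v : V) :
    crF s c e v < k + s := by
  unfold crF
  split
  · have := (c v).isLt; omega
  · rename_i hv
    have h1 := crRk_div_lt c e hs (not_lt.mp hv)
    have h2 := crOff_add_blk_le_sum c s (c v)
    have h3 := crBlk_sum_le c s hs hn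
    omega

private lemma crF_inj_c (s : ℕ) (hs : 0 < s) {u v : V}
    (h : crF s c e u = crF s c e v) : c u = c v := by
  have hu := (c u).isLt
  have hv := (c v).isLt
  unfold crF at h
  by_cases h1 : crRk c e u < 2*s <;> by_cases h2 : crRk c e v < 2*s
  · rw [if_pos h1, if_pos h2] at h; exact Fin.ext h
  · rw [if_pos h1, if_neg h2] at h
    exfalso
    generalize (crRk c e v - 2*s)/s = q at h
    omega
  · rw [if_neg h1, if_pos h2] at h
    exfalso
    generalize (crRk c e u - 2*s)/s = q at h
    omega
  · rw [if_neg h1, if_neg h2] at h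
    have hq1 := crRk_div_lt c e hs (not_lt.mp h1)
    have hq2 := crRk_div_lt c e hs (not_lt.mp h2)
    refine crOff_disj c hq1 hq2 ?_
    generalize (crRk c e u - 2*s)/s = q1 at h ⊢
    generalize (crRk c e v - 2*s)/s = q2 at h ⊢
    omega

end lemmas

/-- **Coloring refinement.** If a finite graph `G` on `n` vertices admits a proper
coloring with `k` colors, then it admits a proper coloring with at most `k + ⌈√n⌉`
colors in which every color class has at most `2⌈√n⌉` vertices. -/
theorem coloring_refinement {V : Type*} [Fintype V] (G : SimpleGraph V) (k : ℕ)
    (h : G.Colorable k) :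
    ∃ c : G.Coloring (Fin (k + ⌈Real.sqrt (Fintype.card V)⌉₊)),
      ∀ i, (Finset.univ.filter fun v => c v = i).card
        ≤ 2 * ⌈Real.sqrt (Fintype.card V)⌉₊ := by
  classical
  obtain ⟨c⟩ := h
  set n := Fintype.card V with hn
  set s := ⌈Real.sqrt n⌉₊ with hsdef
  have hn_le : n ≤ s * s := by
    have h1 : Real.sqrt n ≤ (s : ℝ) := Nat.le_ceil _
    have h2 : (n : ℝ) ≤ (s : ℝ) * s := by
      nlinarith [Real.sq_sqrt (show (0:ℝ) ≤ (n:ℝ) by positivity), Real.sqrt_nonneg (n:ℝ)]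
    exact_mod_cast h2
  cases isEmpty_or_nonempty V with
  | inl hV =>
    refine ⟨⟨fun v => isEmptyElim v, fun {u v} hadj => isEmptyElim u⟩, ?_⟩
    intro i
    simp [Finset.univ_eq_empty]
  | inr hV =>
    have hnpos : 0 < n := Fintype.card_pos
    have hs : 0 < s := by
      rcases Nat.eq_zero_or_pos s with h0 | h0
      · rw [h0] at hn_le; omega
      · exact h0
    let e := Fintype.equivFin V
    have hf_lt : ∀ v, crF s c e v < k + s := crF_lt c e s hs hn_le
    let f : V → Fin (k + s) := fun v => ⟨crF s c e v, hf_lt v⟩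
    have hvalid : ∀ {u v : V}, G.Adj u v → f u ≠ f v := by
      intro u v hadj hfe
      have hcc : c u ≠ c v := c.valid hadj
      exact hcc (crF_inj_c c e s hs (congrArg Fin.val hfe))
    refine ⟨SimpleGraph.Coloring.mk f hvalid, ?_⟩
    intro j
    set C := Finset.univ.filter fun v => (SimpleGraph.Coloring.mk f hvalid) v = j with hC
    have hCf : ∀ v ∈ C, crF s c e v = j.val := by
      intro v hv
      rw [hC, Finset.mem_filter] at hv
      exact congrArg Fin.val hv.2
    rcases Finset.eq_empty_or_nonempty C with hCe | ⟨v0, hv0⟩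
    · rw [hCe]; simp
    -- all members have same color class as v0
    have hsame : ∀ v ∈ C, c v = c v0 := by
      intro v hv
      exact crF_inj_c c e s hs (by rw [hCf v hv, hCf v0 hv0])
    -- rk is injective on C
    have hinj : Set.InjOn (crRk c e) C := by
      intro u hu v hv hr
      exact crRk_inj c e ((hsame u hu).trans (hsame v hv).symm) hr
    -- ranks lie in an interval of length ≤ 2*s
    obtain ⟨a, b, hb, hmem⟩ : ∃ a b, b ≤ 2*s ∧ ∀ v ∈ C, crRk c e v ∈ Finset.Ico a (a+b) := by
      by_cases h0 : crRk c e v0 < 2*s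
      · refine ⟨0, 2*s, le_refl _, fun v hv => ?_⟩
        have : crRk c e v < 2*s := by
          by_contra hcon
          have h1 := hCf v hv
          have h2 := hCf v0 hv0
          rw [crF, if_neg hcon] at h1
          rw [crF, if_pos h0] at h2
          have h3 := (c v0).isLt
          generalize (crRk c e v - 2*s)/s = q at h1
          omega
        simp [this]
      · push_neg at h0
        obtain ⟨t0, ht0⟩ : ∃ t, (crRk c e v0 - 2*s)/s = t := ⟨_, rfl⟩
        refine ⟨2*s + t0*s, s, by omega, fun v hv => ?_⟩
        have hge : 2*s ≤ crRk c e v := by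
          by_contra hcon
          push_neg at hcon
          have h1 := hCf v hv
          have h2 := hCf v0 hv0
          rw [crF, if_pos hcon] at h1
          rw [crF, if_neg (not_lt.mpr h0)] at h2
          have h3 := (c v).isLt
          generalize (crRk c e v0 - 2*s)/s = q at h2
          omega
        have htv : (crRk c e v - 2*s)/s = t0 := by
          have h1 := hCf v hv
          have h2 := hCf v0 hv0
          rw [crF, if_neg (not_lt.mpr hge)] at h1
          rw [crF, if_neg (not_lt.mpr h0)] at h2
          rw [hsame v hv] at h1
          rw [ht0] at h2
          generalize (crRk c e v - 2*s)/s = q at h1 ⊢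
          omega
        have hd1 : t0 * s ≤ crRk c e v - 2*s := by
          rw [← htv]; exact Nat.div_mul_le_self _ _
        have hd2 := Nat.div_add_mod (crRk c e v - 2*s) s
        have hd3 : (crRk c e v - 2*s) % s < s := Nat.mod_lt _ hs
        rw [htv, mul_comm] at hd2
        generalize (crRk c e v - 2*s) % s = r at hd2 hd3
        simp only [Finset.mem_Ico]
        omega
    calc C.card ≤ (Finset.Ico a (a+b)).card :=
          Finset.card_le_card_of_injOn (crRk c e) (fun v hv => hmem v hv) hinj
      _ = b := by rw [Nat.card_Ico]; omega
      _ ≤ 2*s := hb
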